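/- Let g₂ < s < g₁, α > 0, p* = α(s - g₂)/((α+1)(g₁ - s) + α(s - g₂)), and C_α = (s - g₂ - p*(g₁ - g₂))/((1 - p*)·((1 - p*)/p*)^α). Define U(p) = p·g₁ + (1-p)·g₂ + C_α·(1-p)·((1-p)/p)^α for p ∈ (0,1). Then U(p*) = s and U'(p*) = 0. -/

import Mathlib

theorem value_matching_smooth_pasting (s g₁ g₂ α : ℝ) (h₂ : g₂ < s) (h₁ : s < g₁)
    (hα : 0 < α)
    (pstar : ℝ) (hp : pstar = α * (s - g₂) / ((α + 1) * (g₁ - s) + α * (s - g₂)))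
    (Cα : ℝ) (hC : Cα = (s - g₂ - pstar * (g₁ - g₂)) /
      ((1 - pstar) * ((1 - pstar) / pstar) ^ α))
    (U : ℝ → ℝ)
    (hU : U = fun p => p * g₁ + (1 - p) * g₂ + Cα * (1 - p) * ((1 - p) / p) ^ α) :
    U pstar = s ∧ HasDerivAt U 0 pstar := by
  have hD : (0:ℝ) < (α + 1) * (g₁ - s) + α * (s - g₂) := by nlinarith
  have hp0 : 0 < pstar := by
    rw [hp]; exact div_pos (by nlinarith) hD
  have hp1 : pstar < 1 := by
    rw [hp, div_lt_one hD]; nlinarith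
  have h1p : (0:ℝ) < 1 - pstar := by linarith
  have hr : (0:ℝ) < (1 - pstar) / pstar := div_pos h1p hp0
  set r : ℝ := (1 - pstar) / pstar with hrdef
  have ht : (0:ℝ) < r ^ α := Real.rpow_pos_of_pos hr α
  set t : ℝ := r ^ α with htdef
  have hsplit : r ^ (α - 1) = t / r := by
    rw [htdef, Real.rpow_sub hr α 1, Real.rpow_one]
  clear_value t
  clear_value r
  -- value matching
  have hCt : Cα * t = (s - g₂ - pstar * (g₁ - g₂)) / (1 - pstar) := by
    rw [hC]; field_simp
  have hval : U pstar = s := by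
    rw [hU]
    have h : Cα * (1 - pstar) * t = s - g₂ - pstar * (g₁ - g₂) := by
      rw [mul_comm Cα (1 - pstar), mul_assoc, hCt]
      field_simp
    simp only
    rw [← hrdef, ← htdef]
    linear_combination h
  refine ⟨hval, ?_⟩
  -- derivative
  have h1 : HasDerivAt (fun p : ℝ => (1 - p) / p) (-1 / pstar ^ 2) pstar := by
    have := ((hasDerivAt_id pstar).const_sub 1).div (hasDerivAt_id pstar) hp0.ne'
    have e : (-1 * id pstar - (1 - id pstar) * 1) / id pstar ^ 2 = -1 / pstar ^ 2 := by
      simp only [id]; ring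
    rw [e] at this
    exact this
  have h2 : HasDerivAt (fun p : ℝ => ((1 - p) / p) ^ α)
      (α * r ^ (α - 1) * (-1 / pstar ^ 2)) pstar := by
    have hrne : (1 - pstar) / pstar ≠ 0 := by rw [← hrdef]; exact hr.ne'
    have := h1.rpow_const (p := α) (Or.inl hrne)
    rw [← hrdef] at this
    convert this using 1
    ring
  have h3 : HasDerivAt (fun p : ℝ => (1 - p) * ((1 - p) / p) ^ α)
      ((-1) * t + (1 - pstar) * (α * r ^ (α - 1) * (-1 / pstar ^ 2))) pstar := by
    have := ((hasDerivAt_id pstar).const_sub 1).mul h2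
    rw [← hrdef, ← htdef] at this
    exact this
  have h4 := h3.const_mul Cα
  have h5 : HasDerivAt (fun p : ℝ => p * g₁ + (1 - p) * g₂) (g₁ - g₂) pstar := by
    have := ((hasDerivAt_id pstar).mul_const g₁).add
      (((hasDerivAt_id pstar).const_sub 1).mul_const g₂)
    exact this.congr_deriv (by ring)
  have h6 := h5.add h4
  have hkey : g₁ - g₂ + Cα * ((-1) * t + (1 - pstar) * (α * r ^ (α - 1) * (-1 / pstar ^ 2))) = 0 := by
    rw [hsplit]
    have hrval : (1 - pstar) * (t / r) = pstar * t := by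
      rw [hrdef]
      field_simp
    have hexp : Cα * ((-1) * t + (1 - pstar) * (α * (t / r) * (-1 / pstar ^ 2)))
        = -(Cα * t) - α * (Cα * t) / pstar := by
      have h' : (1 - pstar) * (α * (t / r) * (-1 / pstar ^ 2))
          = α * ((1 - pstar) * (t / r)) * (-1 / pstar ^ 2) := by ring
      rw [h', hrval]
      field_simp
      ring
    rw [hexp, hCt]
    have key2 : (g₁ - g₂) * ((1 - pstar) * pstar)
        = (s - g₂ - pstar * (g₁ - g₂)) * (pstar + α) := by
      rw [hp]
      field_simp
      ring
    have hform : g₁ - g₂ + (-((s - g₂ - pstar * (g₁ - g₂)) / (1 - pstar))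
        - α * ((s - g₂ - pstar * (g₁ - g₂)) / (1 - pstar)) / pstar)
        = ((g₁ - g₂) * ((1 - pstar) * pstar)
            - (s - g₂ - pstar * (g₁ - g₂)) * (pstar + α)) / ((1 - pstar) * pstar) := by
      field_simp
      ring
    rw [hform, key2, sub_self, zero_div]
  have h7 : HasDerivAt U (g₁ - g₂ + Cα * ((-1) * t + (1 - pstar) * (α * r ^ (α - 1) * (-1 / pstar ^ 2)))) pstar := by
    rw [hU]
    simp only [← mul_assoc] at h6 ⊢
    exact h6
  rw [hkey] at h7
  exact h7
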